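/- Bounded cancellation (Cooper): Let N ≥ 1 and let Φ be an automorphism of FreeGroup (Fin N). There exists a constant C ≥ 0 such that for all g, h ∈ FreeGroup (Fin N) with norm(g·h) = norm(g) + norm(h) (i.e., the product g·h is reduced, no cancellation occurs), one has norm(Φ(g·h)) ≥ norm(Φ(g)) + norm(Φ(h)) − 2C. -/

import Mathlib

set_option linter.unusedSectionVars false

namespace BddCancel

open FreeGroup List

variable {α : Type*} [DecidableEq α]

/-- Length of the longest common prefix of two lists. -/
def lcp : List (α × Bool) → List (α × Bool) → ℕ
  | a :: u, b :: v => if a = b then lcp u v + 1 else 0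
  | _, _ => 0

@[simp] lemma lcp_nil_left (v : List (α × Bool)) : lcp [] v = 0 := by cases v <;> rfl

@[simp] lemma lcp_nil_right (u : List (α × Bool)) : lcp u [] = 0 := by cases u <;> rfl

@[simp] lemma lcp_cons (a b : α × Bool) (u v : List (α × Bool)) :
    lcp (a :: u) (b :: v) = if a = b then lcp u v + 1 else 0 := rfl

lemma lcp_comm (u v : List (α × Bool)) : lcp u v = lcp v u := by
  induction u generalizing v with
  | nil => simp
  | cons a u ih =>
    cases v with
    | nil => simp
    | cons b v => simp only [lcp_cons, eq_comm, ih]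

lemma lcp_le_length_left (u v : List (α × Bool)) : lcp u v ≤ u.length := by
  induction u generalizing v with
  | nil => simp
  | cons a u ih =>
    cases v with
    | nil => simp
    | cons b v =>
      simp only [lcp_cons, length_cons]
      split
      · exact Nat.succ_le_succ (ih v)
      · omega

lemma lcp_self (u : List (α × Bool)) : lcp u u = u.length := by
  induction u with
  | nil => simp
  | cons a u ih => simp [ih]

lemma lcp_ultra (u v w : List (α × Bool)) : min (lcp u v) (lcp v w) ≤ lcp u w := by
  induction u generalizing v w with
  | nil => simp
  | cons a u ih =>
    cases v with
    | nil => simp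
    | cons b v =>
      cases w with
      | nil => simp
      | cons c w =>
        simp only [lcp_cons]
        by_cases hab : a = b <;> by_cases hbc : b = c
        · subst hab; subst hbc
          simp only [eq_self_iff_true, if_true]
          have := ih v w
          omega
        · subst hab
          simp [hbc]
        · subst hbc
          simp [hab]
        · simp [hbc]

lemma lcp_take_right (u v : List (α × Bool)) (s : ℕ) :
    lcp u (v.take s) = min (lcp u v) s := by
  induction u generalizing v s with
  | nil => simp
  | cons a u ih =>
    cases v with
    | nil => simp
    | cons b v =>
      cases s with
      | zero => simp
      | succ s =>
        simp only [take_succ_cons, lcp_cons]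
        split
        · rw [ih]; omega
        · simp

lemma lcp_append_right (u r : List (α × Bool)) : lcp u (u ++ r) = u.length := by
  induction u with
  | nil => simp
  | cons a u ih => simp [ih]

/-- A word is reduced iff no two adjacent letters cancel. -/
def Reduced (w : List (α × Bool)) : Prop := w.Chain' fun a b => b ≠ (a.1, !a.2)

lemma Reduced.nil : Reduced ([] : List (α × Bool)) := List.isChain_nil

lemma Reduced.tail {w : List (α × Bool)} (h : Reduced w) : Reduced w.tail :=
  List.IsChain.tail h

lemma Reduced.take {w : List (α × Bool)} (h : Reduced w) (s : ℕ) : Reduced (w.take s) :=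
  List.IsChain.take h s

lemma reduce_eq_self_of_reduced {w : List (α × Bool)} (h : Reduced w) : reduce w = w := by
  induction w with
  | nil => rfl
  | cons a w ih =>
    have hw : Reduced w := h.tail
    rw [reduce.cons, ih hw]
    cases w with
    | nil => rfl
    | cons b w' =>
      have hab : b ≠ (a.1, !a.2) := (List.isChain_cons_cons.1 h).1
      have : ¬(a.1 = b.1 ∧ a.2 = !b.2) := by
        rintro ⟨h1, h2⟩
        apply hab
        have : b.2 = !a.2 := by
          cases hb2 : b.2 <;> cases ha2 : a.2 <;> simp_all
        exact Prod.ext h1.symm this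
      simp [this]

lemma reduced_reduce (w : List (α × Bool)) : Reduced (reduce w) := by
  induction w with
  | nil => exact Reduced.nil
  | cons x w ih =>
    rw [reduce.cons]
    cases r : reduce w with
    | nil => simp [Reduced, List.Chain']
    | cons hd tl =>
      rw [r] at ih
      dsimp only
      split
      · exact ih.tail
      · rename_i hcond
        refine List.isChain_cons_cons.2 ⟨?_, ih⟩
        intro hhd
        apply hcond
        rw [hhd]
        exact ⟨rfl, by cases a2 : x.2 <;> simp⟩

lemma Reduced.invRev {w : List (α × Bool)} (h : Reduced w) : Reduced (FreeGroup.invRev w) := by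
  unfold FreeGroup.invRev Reduced List.Chain'
  rw [List.isChain_reverse]
  rw [List.isChain_map]
  refine h.imp ?_
  rintro ⟨a1, a2⟩ ⟨b1, b2⟩ hab hcontra
  apply hab
  simp only [flip] at hcontra
  cases a2 <;> cases b2 <;> simp_all [Prod.ext_iff]



lemma invRev_cons (a : α × Bool) (u : List (α × Bool)) :
    FreeGroup.invRev (a :: u) = FreeGroup.invRev u ++ [(a.1, !a.2)] := by
  simp [FreeGroup.invRev]

/-- Key combinatorial lemma: the reduced form of `u⁻¹ v` has length
`|u| + |v| - 2 lcp u v`. -/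
lemma key_length : ∀ (u : List (α × Bool)), ∀ v : List (α × Bool), Reduced u → Reduced v →
    (reduce (FreeGroup.invRev u ++ v)).length + 2 * lcp u v = u.length + v.length := by
  intro u
  induction u with
  | nil =>
    intro v _ hv
    simp [FreeGroup.invRev, reduce_eq_self_of_reduced hv]
  | cons a u ih =>
    intro v hu hv
    cases v with
    | nil =>
      rw [List.append_nil, reduce_eq_self_of_reduced hu.invRev]
      simp [FreeGroup.invRev_length]
    | cons b v =>
      by_cases hab : a = b
      · subst hab
        have hstep : reduce (FreeGroup.invRev (a :: u) ++ a :: v) =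
            reduce (FreeGroup.invRev u ++ v) := by
          have : FreeGroup.invRev (a :: u) ++ a :: v =
              FreeGroup.invRev u ++ (a.1, !a.2) :: (a.1, a.2) :: v := by
            rw [invRev_cons, List.append_assoc]
            rfl
          rw [this]
          exact reduce.Step.eq (FreeGroup.Red.Step.not_rev)
        rw [hstep]
        have := ih v hu.tail hv.tail
        simp only [lcp_cons, eq_self_iff_true, if_true, List.length_cons]
        omega
      · have hred : Reduced (FreeGroup.invRev (a :: u) ++ b :: v) := by
          refine List.isChain_append.2 ⟨hu.invRev, hv, ?_⟩
          intro x hx y hy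
          rw [invRev_cons] at hx
          rw [List.getLast?_concat] at hx
          simp only [Option.mem_def, Option.some.injEq] at hx
          simp only [List.head?_cons, Option.mem_def, Option.some.injEq] at hy
          subst hx; subst hy
          simp only [Bool.not_not]
          intro hcontra
          exact hab (by rw [hcontra])
        rw [reduce_eq_self_of_reduced hred]
        simp [FreeGroup.invRev_length, hab]

/-- `lcp` of reduced words of two free group elements. -/
def cp (x y : FreeGroup α) : ℕ := lcp x.toWord y.toWord

lemma reduced_toWord (x : FreeGroup α) : Reduced x.toWord := by
  rw [← FreeGroup.reduce_toWord]
  exact reduced_reduce _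

lemma norm_mk_of_reduced {w : List (α × Bool)} (h : Reduced w) :
    (FreeGroup.mk w).norm = w.length := by
  rw [FreeGroup.norm, FreeGroup.toWord_mk, reduce_eq_self_of_reduced h]

lemma toWord_mk_of_reduced {w : List (α × Bool)} (h : Reduced w) :
    (FreeGroup.mk w).toWord = w := by
  rw [FreeGroup.toWord_mk, reduce_eq_self_of_reduced h]

/-- The tree distance formula: `‖x⁻¹ y‖ + 2 (x·y) = ‖x‖ + ‖y‖`. -/
lemma dist_formula (x y : FreeGroup α) :
    (x⁻¹ * y).norm + 2 * cp x y = x.norm + y.norm := by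
  have hx : x = FreeGroup.mk x.toWord := (FreeGroup.mk_toWord).symm
  have hy : y = FreeGroup.mk y.toWord := (FreeGroup.mk_toWord).symm
  have : x⁻¹ * y = FreeGroup.mk (FreeGroup.invRev x.toWord ++ y.toWord) := by
    conv_lhs => rw [hx, hy]
    rw [FreeGroup.inv_mk, FreeGroup.mul_mk]
  rw [this, FreeGroup.norm, FreeGroup.toWord_mk]
  exact key_length _ _ (reduced_toWord x) (reduced_toWord y)

lemma cp_comm (x y : FreeGroup α) : cp x y = cp y x := lcp_comm _ _

lemma cp_le_norm_left (x y : FreeGroup α) : cp x y ≤ x.norm := lcp_le_length_left _ _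

lemma cp_self (x : FreeGroup α) : cp x x = x.norm := lcp_self _

lemma cp_ultra (x y z : FreeGroup α) : min (cp x y) (cp y z) ≤ cp x z := lcp_ultra _ _ _

@[simp] lemma cp_one_left (x : FreeGroup α) : cp 1 x = 0 := by
  simp [cp, FreeGroup.toWord_one]

/-- distance triangle inequality in the form we need -/
lemma dist_triangle (x y z : FreeGroup α) :
    (x⁻¹ * z).norm ≤ (x⁻¹ * y).norm + (y⁻¹ * z).norm := by
  have : x⁻¹ * z = (x⁻¹ * y) * (y⁻¹ * z) := by group
  rw [this]
  exact FreeGroup.norm_mul_le _ _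

lemma dist_symm (x y : FreeGroup α) : (x⁻¹ * y).norm = (y⁻¹ * x).norm := by
  rw [← FreeGroup.norm_inv_eq]
  congr 1
  group

/-- Lipschitz bound for monoid homs between free groups. -/
lemma norm_hom_single {β : Type*} [DecidableEq β] (f : FreeGroup α →* FreeGroup β)
    {L : ℕ} (hL : ∀ a : α, (f (FreeGroup.of a)).norm ≤ L) (c : α × Bool) :
    (f (FreeGroup.mk [c])).norm ≤ L := by
  obtain ⟨c1, c2⟩ := c
  cases c2
  · have : FreeGroup.mk [(c1, false)] = (FreeGroup.of c1)⁻¹ := by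
      rw [FreeGroup.of, FreeGroup.inv_mk]
      rfl
    rw [this, _root_.map_inv, FreeGroup.norm_inv_eq]
    exact hL c1
  · exact hL c1

lemma norm_hom_le {β : Type*} [DecidableEq β] (f : FreeGroup α →* FreeGroup β)
    {L : ℕ} (hL : ∀ a : α, (f (FreeGroup.of a)).norm ≤ L) (x : FreeGroup α) :
    (f x).norm ≤ L * x.norm := by
  have single : ∀ c : α × Bool, (f (FreeGroup.mk [c])).norm ≤ L := norm_hom_single f hL
  have main : ∀ w : List (α × Bool), (f (FreeGroup.mk w)).norm ≤ L * w.length := by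
    intro w
    induction w with
    | nil =>
      have : FreeGroup.mk ([] : List (α × Bool)) = 1 := (FreeGroup.one_eq_mk).symm
      simp [this]
    | cons c w ihw =>
      have : FreeGroup.mk (c :: w) = FreeGroup.mk [c] * FreeGroup.mk w := by
        rw [FreeGroup.mul_mk]; rfl
      rw [this, _root_.map_mul]
      calc (f (FreeGroup.mk [c]) * f (FreeGroup.mk w)).norm
          ≤ (f (FreeGroup.mk [c])).norm + (f (FreeGroup.mk w)).norm :=
            FreeGroup.norm_mul_le _ _
        _ ≤ L + L * w.length := Nat.add_le_add (single c) ihw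
        _ = L * (c :: w).length := by rw [List.length_cons, Nat.mul_succ, Nat.add_comm]
  calc (f x).norm = (f (FreeGroup.mk x.toWord)).norm := by rw [FreeGroup.mk_toWord]
    _ ≤ L * x.toWord.length := main _
    _ = L * x.norm := rfl



lemma take_succ_get (l : List (α × Bool)) (i : ℕ) (h : i < l.length) :
    l.take (i+1) = l.take i ++ [l.get ⟨i, h⟩] := by
  rw [List.take_succ, List.getElem?_eq_getElem h]
  rfl

end BddCancel

open BddCancel FreeGroup

/-- **Bounded cancellation** (Cooper). For every automorphism `Φ` of the free
group `F_N` there is a constant `C ≥ 0` such that whenever the product `g * h` is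
reduced (no cancellation, i.e. `‖g h‖ = ‖g‖ + ‖h‖`), at most `2C` letters cancel
in the product `Φ(g) Φ(h)`. -/
theorem statement_6 (N : ℕ) (hN : 1 ≤ N) (Φ : MulAut (FreeGroup (Fin N))) :
    ∃ C : ℤ, 0 ≤ C ∧ ∀ g h : FreeGroup (Fin N),
      (g * h).norm = g.norm + h.norm →
      ((Φ (g * h)).norm : ℤ) ≥ ((Φ g).norm : ℤ) + ((Φ h).norm : ℤ) - 2 * C := by
  -- Lipschitz constants for `Φ` and `Φ⁻¹`
  set L : ℕ := (Finset.univ : Finset (Fin N)).sup (fun i => (Φ (of i)).norm) + 1 with hLdef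
  have hL : ∀ a : Fin N, (Φ.toMonoidHom (of a)).norm ≤ L := by
    intro a
    have h1 : (Φ (of a)).norm ≤ (Finset.univ : Finset (Fin N)).sup (fun i => (Φ (of i)).norm) :=
      Finset.le_sup (f := fun i => (Φ (of i)).norm) (Finset.mem_univ a)
    have h2 : (Φ.toMonoidHom (of a)).norm = (Φ (of a)).norm := rfl
    rw [h2, hLdef]
    omega
  set L' : ℕ := (Finset.univ : Finset (Fin N)).sup (fun i => (Φ.symm (of i)).norm) + 1 with hL'def
  have hL' : ∀ a : Fin N, (Φ.symm.toMonoidHom (of a)).norm ≤ L' := by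
    intro a
    have h1 : (Φ.symm (of a)).norm ≤ (Finset.univ : Finset (Fin N)).sup (fun i => (Φ.symm (of i)).norm) :=
      Finset.le_sup (f := fun i => (Φ.symm (of i)).norm) (Finset.mem_univ a)
    have h2 : (Φ.symm.toMonoidHom (of a)).norm = (Φ.symm (of a)).norm := rfl
    rw [h2, hL'def]
    omega
  set C0 : ℕ := 2 * L * L * L' + L + 1 with hC0def
  refine ⟨(C0 : ℤ), by positivity, ?_⟩
  intro g h hgh
  -- reduce the goal to a statement about the common prefix of `Φ g` and `Φ (g h)`
  suffices hmain : (Φ g).norm ≤ cp (Φ g) (Φ (g * h)) + C0 by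
    have hΦh : Φ h = (Φ g)⁻¹ * Φ (g * h) := by
      rw [_root_.map_mul]; group
    have hdf := dist_formula (Φ g) (Φ (g * h))
    rw [hΦh]
    omega
  by_contra hcon
  push_neg at hcon
  set p : FreeGroup (Fin N) := Φ g with hpdef
  set z : FreeGroup (Fin N) := Φ (g * h) with hzdef
  set m : ℕ := cp p z with hmdef
  have hm1 : m + C0 < p.norm := hcon
  have hC0pos : 1 ≤ C0 := by omega
  have hm2 : m + 1 ≤ p.norm := by omega
  -- `g` and `h` are nontrivial
  have hg1 : 1 ≤ g.norm := by
    rcases Nat.eq_zero_or_pos g.norm with h0 | h1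
    · exfalso
      have : g = 1 := norm_eq_zero.1 h0
      rw [this] at hpdef
      simp only [_root_.map_one] at hpdef
      rw [hpdef] at hm1
      simp [FreeGroup.norm_one] at hm1
    · exact h1
  have hh1 : 1 ≤ h.norm := by
    rcases Nat.eq_zero_or_pos h.norm with h0 | h1
    · exfalso
      have hh : h = 1 := norm_eq_zero.1 h0
      have : z = p := by rw [hzdef, hpdef, hh, mul_one]
      rw [this] at hmdef
      rw [hmdef, cp_self] at hm1
      omega
    · exact h1
  -- the reduced word of `g * h` is the concatenation of those of `g` and `h`
  set w : List (Fin N × Bool) := (g * h).toWord with hwdef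
  have hw : w = g.toWord ++ h.toWord := by
    have e1 : g * h = mk (g.toWord ++ h.toWord) := by
      rw [← mul_mk, mk_toWord, mk_toWord]
    have e2 : w = reduce (g.toWord ++ h.toWord) := by
      rw [hwdef, e1, toWord_mk]
    have hsub : List.Sublist (reduce (g.toWord ++ h.toWord)) (g.toWord ++ h.toWord) :=
      FreeGroup.Red.sublist reduce.red
    have hlen : (reduce (g.toWord ++ h.toWord)).length =
        (g.toWord ++ h.toWord).length := by
      rw [← e2]
      have : w.length = (g * h).norm := rfl
      rw [this, hgh, List.length_append]
      rfl
    rw [e2]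
    exact hsub.eq_of_length hlen
  set n : ℕ := w.length with hndef
  have hn : n = g.norm + h.norm := by
    rw [hndef, hwdef]; exact hgh
  set k : ℕ := g.norm with hkdef
  have hkn : k < n := by omega
  have htake_k : w.take k = g.toWord := by
    rw [hw, hkdef]
    exact List.take_left' rfl
  -- the prefix points
  set x : ℕ → FreeGroup (Fin N) := fun i => mk (w.take i) with hxdef
  have hredw : Reduced w := reduced_toWord (g * h)
  have hxtoWord : ∀ i, (x i).toWord = w.take i := fun i =>
    toWord_mk_of_reduced (hredw.take i)
  have hxk : x k = g := by
    rw [hxdef]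
    simp only
    rw [htake_k, mk_toWord]
  have hxn : x n = g * h := by
    rw [hxdef]
    simp only
    rw [hndef, List.take_length, hwdef, mk_toWord]
  have hx0 : x 0 = 1 := by
    rw [hxdef]
    simp only [List.take_zero]
    rw [one_eq_mk]
  have hnormx : ∀ i, i ≤ n → (x i).norm = i := by
    intro i hi
    have : (x i).norm = (w.take i).length := by
      rw [FreeGroup.norm, hxtoWord]
    rw [this, List.length_take]
    omega
  have hcpx : ∀ s t, s ≤ t → t ≤ n → cp (x s) (x t) = s := by
    intro s t hst htn
    have e0 : cp (x s) (x t) = lcp (w.take s) (w.take t) := by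
      rw [cp, hxtoWord, hxtoWord]
    have e1 : lcp (w.take s) (w.take t) = min (lcp (w.take s) w) t :=
      lcp_take_right _ _ _
    have e2 : lcp (w.take s) w = min n s := by
      rw [lcp_comm, lcp_take_right, lcp_self]
    rw [e0, e1, e2]
    omega
  -- single Lipschitz step
  have hstep : ∀ i, i < n → ((Φ (x i))⁻¹ * Φ (x (i+1))).norm ≤ L := by
    intro i hi
    have hx1 : x (i+1) = x i * mk [w.get ⟨i, hi⟩] := by
      rw [hxdef]
      simp only
      rw [take_succ_get w i hi, ← mul_mk]
    have : (Φ (x i))⁻¹ * Φ (x (i+1)) = Φ.toMonoidHom (mk [w.get ⟨i, hi⟩]) := by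
      rw [hx1, _root_.map_mul]
      simp [MulEquiv.coe_toMonoidHom]
    rw [this]
    exact norm_hom_single Φ.toMonoidHom hL _
  -- chain Lipschitz bound
  have hchain : ∀ d s, s + d ≤ n → ((Φ (x s))⁻¹ * Φ (x (s + d))).norm ≤ L * d := by
    intro d
    induction d with
    | zero =>
      intro s _
      simp
    | succ d ih =>
      intro s hs
      have h1 : ((Φ (x s))⁻¹ * Φ (x (s + d))).norm ≤ L * d := ih s (by omega)
      have h2 : ((Φ (x (s + d)))⁻¹ * Φ (x (s + d + 1))).norm ≤ L :=
        hstep (s + d) (by omega)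
      have h3 := dist_triangle (Φ (x s)) (Φ (x (s + d))) (Φ (x (s + d + 1)))
      have : s + (d + 1) = s + d + 1 := by omega
      rw [this]
      calc ((Φ (x s))⁻¹ * Φ (x (s + d + 1))).norm
          ≤ ((Φ (x s))⁻¹ * Φ (x (s + d))).norm +
            ((Φ (x (s + d)))⁻¹ * Φ (x (s + d + 1))).norm := h3
        _ ≤ L * d + L := Nat.add_le_add h1 h2
        _ = L * (d + 1) := by ring
  -- co-Lipschitz bound
  have hcolip : ∀ s t, s ≤ t → t ≤ n → t - s ≤ L' * ((Φ (x s))⁻¹ * Φ (x t)).norm := by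
    intro s t hst htn
    have e1 : ((x s)⁻¹ * x t).norm = t - s := by
      have := dist_formula (x s) (x t)
      rw [hcpx s t hst htn, hnormx s (le_trans hst htn), hnormx t htn] at this
      omega
    have e2 : (x s)⁻¹ * x t = Φ.symm.toMonoidHom (Φ ((x s)⁻¹ * x t)) := by
      simp [MulEquiv.coe_toMonoidHom]
    have e3 : Φ ((x s)⁻¹ * x t) = (Φ (x s))⁻¹ * Φ (x t) := by
      rw [_root_.map_mul, _root_.map_inv]
    calc t - s = ((x s)⁻¹ * x t).norm := e1.symm
      _ = (Φ.symm.toMonoidHom (Φ ((x s)⁻¹ * x t))).norm := by rw [← e2]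
      _ ≤ L' * (Φ ((x s)⁻¹ * x t)).norm := norm_hom_le _ hL' _
      _ = L' * ((Φ (x s))⁻¹ * Φ (x t)).norm := by rw [e3]
  -- the gate point at depth `m + 1` along `p`
  set q : FreeGroup (Fin N) := mk (p.toWord.take (m+1)) with hqdef
  have hqtoWord : q.toWord = p.toWord.take (m+1) :=
    toWord_mk_of_reduced ((reduced_toWord p).take _)
  have hnormq : q.norm = m + 1 := by
    rw [FreeGroup.norm, hqtoWord, List.length_take]
    have : p.norm = p.toWord.length := rfl
    omega
  have hcpq : ∀ u : FreeGroup (Fin N), cp u q = min (cp u p) (m+1) := by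
    intro u
    rw [cp, hqtoWord, lcp_take_right]
    rfl
  -- the gate lemma
  have hgate : ∀ u v : FreeGroup (Fin N), cp u p ≤ m → m + 1 ≤ cp v p →
      (v⁻¹ * q).norm ≤ (u⁻¹ * v).norm := by
    intro u v h1 h2
    have e1 := dist_formula v q
    have e2 := dist_formula u v
    have e3 : cp v q = m + 1 := by
      rw [hcpq v]
      exact min_eq_right h2
    have e4 : cp u v ≤ m := by
      have h5 : min (cp u v) (cp v p) ≤ m := le_trans (cp_ultra u v p) h1
      rcases le_total (cp u v) (cp v p) with hle | hle
      · rw [min_eq_left hle] at h5; exact h5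
      · rw [min_eq_right hle] at h5; omega
    have e5 : cp u v ≤ u.norm := cp_le_norm_left u v
    rw [e3, hnormq] at e1
    omega
  -- levels of the quasigeodesic relative to `p`
  have hPk : cp (Φ (x k)) p = p.norm := by
    rw [hxk, ← hpdef, cp_self]
  have hPn : cp (Φ (x n)) p = m := by
    rw [hxn, ← hzdef, hmdef, cp_comm]
  have hP0 : cp (Φ (x 0)) p = 0 := by
    rw [hx0, _root_.map_one, cp_one_left]
  -- the first exit time after k
  have hEj : ∃ t, k < t ∧ cp (Φ (x t)) p ≤ m := ⟨n, hkn, le_of_eq hPn⟩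
  set j : ℕ := Nat.find hEj with hjdef
  have hjspec : k < j ∧ cp (Φ (x j)) p ≤ m := by rw [hjdef]; exact Nat.find_spec hEj
  have hkj : k < j := hjspec.1
  have hjn : j ≤ n := by rw [hjdef]; exact Nat.find_le ⟨hkn, le_of_eq hPn⟩
  have hjmin : ∀ t, k < t → t < j → m + 1 ≤ cp (Φ (x t)) p := by
    intro t h1 h2
    have h2' : t < Nat.find hEj := by rw [← hjdef]; exact h2
    have := Nat.find_min hEj h2'
    by_contra hcc
    push_neg at hcc
    exact this ⟨h1, by omega⟩
  -- the last entry time before k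
  have hEs : ∃ s, cp (Φ (x (k - s))) p ≤ m := ⟨k, by rw [Nat.sub_self, hP0]; omega⟩
  set s₀ : ℕ := Nat.find hEs with hs₀def
  have hs : cp (Φ (x (k - s₀))) p ≤ m := by rw [hs₀def]; exact Nat.find_spec hEs
  have hs₀k : s₀ ≤ k := by
    rw [hs₀def]; exact Nat.find_le (by rw [Nat.sub_self, hP0]; omega)
  have hs₀pos : 1 ≤ s₀ := by
    rcases Nat.eq_zero_or_pos s₀ with h0 | h1
    · exfalso
      rw [h0, Nat.sub_zero, hPk] at hs
      omega
    · exact h1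
  set i : ℕ := k - s₀ with hidef
  have hik : i < k := by omega
  have himax : ∀ t, i < t → t ≤ k → m + 1 ≤ cp (Φ (x t)) p := by
    intro t h1 h2
    have hslt : k - t < Nat.find hEs := by rw [← hs₀def]; omega
    have := Nat.find_min hEs hslt
    have hkt : k - (k - t) = t := by omega
    rw [hkt] at this
    omega
  -- apply the gate lemma on both sides of k
  have hPi : cp (Φ (x i)) p ≤ m := hs
  have hPi1 : m + 1 ≤ cp (Φ (x (i+1))) p := himax (i+1) (by omega) (by omega)
  have gA : ((Φ (x (i+1)))⁻¹ * q).norm ≤ L := by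
    refine le_trans (hgate (Φ (x i)) (Φ (x (i+1))) hPi hPi1) ?_
    exact hstep i (by omega)
  have hPj1 : m + 1 ≤ cp (Φ (x (j-1))) p := by
    rcases Nat.lt_or_ge k (j-1) with hc1 | hc2
    · exact hjmin (j-1) hc1 (by omega)
    · have : j - 1 = k := by omega
      rw [this, hPk]
      omega
  have gB : ((Φ (x (j-1)))⁻¹ * q).norm ≤ L := by
    refine le_trans (hgate (Φ (x j)) (Φ (x (j-1))) hjspec.2 hPj1) ?_
    rw [dist_symm]
    have hj1n : j - 1 < n := by omega
    have : j - 1 + 1 = j := by omega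
    calc ((Φ (x (j-1)))⁻¹ * Φ (x j)).norm
        = ((Φ (x (j-1)))⁻¹ * Φ (x (j-1+1))).norm := by rw [this]
      _ ≤ L := hstep (j-1) (by omega)
  -- the two near-gate points are close, so few steps separate them
  have dAB : ((Φ (x (i+1)))⁻¹ * Φ (x (j-1))).norm ≤ 2 * L := by
    calc ((Φ (x (i+1)))⁻¹ * Φ (x (j-1))).norm
        ≤ ((Φ (x (i+1)))⁻¹ * q).norm + (q⁻¹ * Φ (x (j-1))).norm :=
          dist_triangle _ _ _
      _ = ((Φ (x (i+1)))⁻¹ * q).norm + ((Φ (x (j-1)))⁻¹ * q).norm := by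
          rw [dist_symm q]
      _ ≤ 2 * L := by omega
  have hij : i + 1 ≤ j - 1 := by omega
  have hcol : (j - 1) - (i + 1) ≤ L' * (2 * L) := by
    calc (j - 1) - (i + 1) ≤ L' * ((Φ (x (i+1)))⁻¹ * Φ (x (j-1))).norm :=
          hcolip (i+1) (j-1) hij (by omega)
      _ ≤ L' * (2 * L) := Nat.mul_le_mul_left _ dAB
  have hki : k - (i + 1) ≤ 2 * L * L' := by
    have h1 : k ≤ j - 1 := by omega
    have h2 : L' * (2 * L) = 2 * L * L' := by ring
    omega
  -- p = Φ(x k) is close to Φ(x (i+1))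
  have dPk : ((Φ (x (i+1)))⁻¹ * p).norm ≤ L * (2 * L * L') := by
    have e : (i + 1) + (k - (i+1)) = k := by omega
    calc ((Φ (x (i+1)))⁻¹ * p).norm
        = ((Φ (x (i+1)))⁻¹ * Φ (x ((i+1) + (k - (i+1))))).norm := by
          rw [e, hxk, ← hpdef]
      _ ≤ L * (k - (i+1)) := hchain (k - (i+1)) (i+1) (by omega)
      _ ≤ L * (2 * L * L') := Nat.mul_le_mul_left _ hki
  -- but p is far from the gate q
  have dpq : (p⁻¹ * q).norm + 2 * (m + 1) = p.norm + (m + 1) := by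
    have e := dist_formula p q
    have e3 : cp p q = m + 1 := by
      rw [hcpq p, cp_self]
      exact min_eq_right hm2
    rw [e3, hnormq] at e
    exact e
  have htri : (p⁻¹ * q).norm ≤ (p⁻¹ * Φ (x (i+1))).norm + ((Φ (x (i+1)))⁻¹ * q).norm :=
    dist_triangle _ _ _
  have hsymm : (p⁻¹ * Φ (x (i+1))).norm = ((Φ (x (i+1)))⁻¹ * p).norm := dist_symm _ _
  -- contradiction
  have : p.norm ≤ m + C0 := by
    rw [hsymm] at htri
    have h1 : (p⁻¹ * q).norm ≤ L * (2 * L * L') + L := by omega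
    have h2 : L * (2 * L * L') = 2 * L * L * L' := by ring
    omega
  omega
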